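/- Let D be the derivation p(x)·d/dx on k(x) with p ∈ k[x], let T ∈ k(x)^{n×n} with an irreducible left matrix fraction description T = D_M^{-1}N (D_M, N polynomial matrices), and set θ = D + T (acting on k(x)^n by θ(v) = D(v) + T·v, where D acts entrywise). Let θ_1 = D + (N − D(D_M))·D_M^{-1}. Then for all s ≥ 0, θ^s = D^s + D_M^{-1}·Ω_s, where Ω_s = Σ_{i=0}^{s−1} θ_1^i ∘ N ∘ D^{s−1−i} (with N denoting left multiplication by the polynomial matrix N). -/

import Mathlib

open Polynomial

noncomputable section

/-- Normalization on a field: every nonzero element normalizes to `1`. -/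
noncomputable def fieldNormalizationMonoid (K : Type*) [Field K] : NormalizationMonoid K := by
  classical
  exact
  { normUnit := fun a => if h : a = 0 then 1 else (Units.mk0 a h)⁻¹
    normUnit_zero := dif_pos rfl
    normUnit_one := by
      rw [dif_neg one_ne_zero]
      exact Units.ext (by simp)
    normUnit_mul_units := fun {a} u ha => by
      rw [dif_neg (mul_ne_zero ha u.ne_zero), dif_neg ha]
      exact Units.ext (by simp <;> ring) }

attribute [local instance] fieldNormalizationMonoid

noncomputable local instance (K : Type*) [Field K] : NormalizedGCDMonoid (Polynomial K) :=
  UniqueFactorizationMonoid.toNormalizedGCDMonoid _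

variable {k : Type*} [Field k] [CharZero k]

/-- The ℓ-th determinantal denominator of a rational matrix: the monic least common
denominator of all minors of size at most ℓ. -/
def detDen {n p : ℕ} (R : Matrix (Fin n) (Fin p) (RatFunc k)) (ℓ : ℕ) : Polynomial k :=
  (Finset.range (ℓ + 1)).lcm fun i =>
    (Finset.univ : Finset ((Fin i ↪ Fin n) × (Fin i ↪ Fin p))).lcm fun fg =>
      (Matrix.det fun a b => R (fg.1 a) (fg.2 b)).denom

/-- Derivative of a rational function. -/
def rfDeriv (f : RatFunc k) : RatFunc k :=
  algebraMap (Polynomial k) (RatFunc k)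
      (Polynomial.derivative f.num * f.denom - f.num * Polynomial.derivative f.denom) /
    algebraMap (Polynomial k) (RatFunc k) (f.denom ^ 2)

/-- The derivation `p(x) d/dx` on `k(x)`. -/
def pDeriv (p : Polynomial k) (f : RatFunc k) : RatFunc k :=
  algebraMap (Polynomial k) (RatFunc k) p * rfDeriv f

/-- Entrywise action of the derivation `p(x) d/dx` on vectors. -/
def pDerivVec {n : ℕ} (p : Polynomial k) (v : Fin n → RatFunc k) : Fin n → RatFunc k :=
  fun i => pDeriv p (v i)

/-- The pseudo-linear map `θ = D + T` on `k(x)^n`, `θ(v) = D(v) + T v`. -/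
def pseudoLinDiff {n : ℕ} (p : Polynomial k) (T : Matrix (Fin n) (Fin n) (RatFunc k))
    (v : Fin n → RatFunc k) : Fin n → RatFunc k :=
  pDerivVec p v + T.mulVec v

set_option linter.unusedSectionVars false
set_option linter.unusedVariables false
set_option linter.unusedTactic false
set_option maxHeartbeats 1000000

lemma rfDeriv_div (a b : Polynomial k) (hb : b ≠ 0) :
    rfDeriv (algebraMap (Polynomial k) (RatFunc k) a / algebraMap (Polynomial k) (RatFunc k) b) =
      algebraMap (Polynomial k) (RatFunc k) (derivative a * b - a * derivative b) /
        algebraMap (Polynomial k) (RatFunc k) (b ^ 2) := by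
  set A := algebraMap (Polynomial k) (RatFunc k)
  set f : RatFunc k := A a / A b with hf
  have hbne : (A b) ≠ 0 := RatFunc.algebraMap_ne_zero hb
  have hdne : (A f.denom) ≠ 0 := RatFunc.algebraMap_ne_zero f.denom_ne_zero
  have hcross : f.num * b = a * f.denom := by
    apply RatFunc.algebraMap_injective k
    rw [map_mul, map_mul]
    have h1 : A f.num / A f.denom = A a / A b := by rw [RatFunc.num_div_denom]
    field_simp at h1
    linear_combination h1
  have hdvd : f.denom ∣ b := by
    have : f.denom ∣ f.num * b := ⟨a, by linear_combination hcross⟩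
    exact (f.isCoprime_num_denom.symm).dvd_of_dvd_mul_left this
  obtain ⟨c, hc⟩ := hdvd
  have hcne : c ≠ 0 := by rintro rfl; simp at hc; exact hb hc
  have ha : a = f.num * c := by
    have h2 : a * f.denom = (f.num * c) * f.denom := by
      rw [hc] at hcross; linear_combination -hcross
    exact mul_right_cancel₀ f.denom_ne_zero h2
  have hnum : derivative a * b - a * derivative b =
      c ^ 2 * (derivative f.num * f.denom - f.num * derivative f.denom) := by
    rw [ha, hc]; simp only [derivative_mul]; ring
  have hden : b ^ 2 = c ^ 2 * f.denom ^ 2 := by rw [hc]; ring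
  rw [hnum, hden, map_mul, map_mul, mul_div_mul_left]
  · rfl
  · exact RatFunc.algebraMap_ne_zero (pow_ne_zero 2 hcne)

lemma rfDeriv_algebraMap (a : Polynomial k) :
    rfDeriv (algebraMap (Polynomial k) (RatFunc k) a) =
      algebraMap (Polynomial k) (RatFunc k) (derivative a) := by
  simpa using rfDeriv_div a 1 one_ne_zero

lemma rfDeriv_div_add (a1 b1 a2 b2 : Polynomial k) (h1 : b1 ≠ 0) (h2 : b2 ≠ 0) :
    rfDeriv (algebraMap (Polynomial k) (RatFunc k) a1 / algebraMap (Polynomial k) (RatFunc k) b1 +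
        algebraMap (Polynomial k) (RatFunc k) a2 / algebraMap (Polynomial k) (RatFunc k) b2) =
      rfDeriv (algebraMap (Polynomial k) (RatFunc k) a1 / algebraMap (Polynomial k) (RatFunc k) b1) +
        rfDeriv (algebraMap (Polynomial k) (RatFunc k) a2 / algebraMap (Polynomial k) (RatFunc k) b2) := by
  set A := algebraMap (Polynomial k) (RatFunc k)
  have hb1 : (A b1) ≠ 0 := RatFunc.algebraMap_ne_zero h1
  have hb2 : (A b2) ≠ 0 := RatFunc.algebraMap_ne_zero h2
  have hsum : A a1 / A b1 + A a2 / A b2 = A (a1 * b2 + a2 * b1) / A (b1 * b2) := by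
    field_simp
    simp only [map_mul, map_add]; ring
  rw [hsum, rfDeriv_div _ _ (mul_ne_zero h1 h2), rfDeriv_div _ _ h1, rfDeriv_div _ _ h2]
  have e1 : (A (b1 ^ 2)) ≠ 0 := RatFunc.algebraMap_ne_zero (pow_ne_zero 2 h1)
  have e2 : (A (b2 ^ 2)) ≠ 0 := RatFunc.algebraMap_ne_zero (pow_ne_zero 2 h2)
  have e12 : (A ((b1 * b2) ^ 2)) ≠ 0 :=
    RatFunc.algebraMap_ne_zero (pow_ne_zero 2 (mul_ne_zero h1 h2))
  rw [div_add_div _ _ e1 e2, div_eq_div_iff e12 (mul_ne_zero e1 e2)]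
  rw [show algebraMap (Polynomial k) (RatFunc k) = A from rfl]
  simp only [← map_mul, ← map_add]
  refine congrArg A ?_
  simp only [derivative_mul, derivative_add]
  ring

lemma rfDeriv_div_mul (a1 b1 a2 b2 : Polynomial k) (h1 : b1 ≠ 0) (h2 : b2 ≠ 0) :
    rfDeriv (algebraMap (Polynomial k) (RatFunc k) a1 / algebraMap (Polynomial k) (RatFunc k) b1 *
        (algebraMap (Polynomial k) (RatFunc k) a2 / algebraMap (Polynomial k) (RatFunc k) b2)) =
      rfDeriv (algebraMap (Polynomial k) (RatFunc k) a1 / algebraMap (Polynomial k) (RatFunc k) b1) *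
          (algebraMap (Polynomial k) (RatFunc k) a2 / algebraMap (Polynomial k) (RatFunc k) b2) +
        algebraMap (Polynomial k) (RatFunc k) a1 / algebraMap (Polynomial k) (RatFunc k) b1 *
          rfDeriv (algebraMap (Polynomial k) (RatFunc k) a2 / algebraMap (Polynomial k) (RatFunc k) b2) := by
  set A := algebraMap (Polynomial k) (RatFunc k)
  have hb1 : (A b1) ≠ 0 := RatFunc.algebraMap_ne_zero h1
  have hb2 : (A b2) ≠ 0 := RatFunc.algebraMap_ne_zero h2
  have hprod : A a1 / A b1 * (A a2 / A b2) = A (a1 * a2) / A (b1 * b2) := by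
    rw [div_mul_div_comm, map_mul, map_mul]
  rw [hprod, rfDeriv_div _ _ (mul_ne_zero h1 h2), rfDeriv_div _ _ h1, rfDeriv_div _ _ h2]
  have e1 : (A (b1 ^ 2)) ≠ 0 := RatFunc.algebraMap_ne_zero (pow_ne_zero 2 h1)
  have e2 : (A (b2 ^ 2)) ≠ 0 := RatFunc.algebraMap_ne_zero (pow_ne_zero 2 h2)
  have e12 : (A ((b1 * b2) ^ 2)) ≠ 0 :=
    RatFunc.algebraMap_ne_zero (pow_ne_zero 2 (mul_ne_zero h1 h2))
  rw [div_mul_div_comm, div_mul_div_comm,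
    div_add_div _ _ (mul_ne_zero e1 hb2) (mul_ne_zero hb1 e2),
    div_eq_div_iff e12 (mul_ne_zero (mul_ne_zero e1 hb2) (mul_ne_zero hb1 e2))]
  rw [show algebraMap (Polynomial k) (RatFunc k) = A from rfl]
  simp only [← map_mul, ← map_add]
  refine congrArg A ?_
  simp only [derivative_mul]
  ring

lemma rfDeriv_add (f g : RatFunc k) : rfDeriv (f + g) = rfDeriv f + rfDeriv g := by
  rw [← RatFunc.num_div_denom f, ← RatFunc.num_div_denom g]
  exact rfDeriv_div_add _ _ _ _ f.denom_ne_zero g.denom_ne_zero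

lemma rfDeriv_mul (f g : RatFunc k) : rfDeriv (f * g) = rfDeriv f * g + f * rfDeriv g := by
  rw [← RatFunc.num_div_denom f, ← RatFunc.num_div_denom g]
  exact rfDeriv_div_mul _ _ _ _ f.denom_ne_zero g.denom_ne_zero

lemma rfDeriv_zero : rfDeriv (0 : RatFunc k) = 0 := by
  simpa using rfDeriv_algebraMap (0 : Polynomial k)

/-- `pDeriv` as an additive monoid hom. -/
def pDerivHom (p : Polynomial k) : RatFunc k →+ RatFunc k where
  toFun := pDeriv p
  map_zero' := by simp [pDeriv, rfDeriv_zero]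
  map_add' f g := by simp [pDeriv, rfDeriv_add, mul_add]

lemma pDeriv_add (p : Polynomial k) (f g : RatFunc k) :
    pDeriv p (f + g) = pDeriv p f + pDeriv p g := (pDerivHom p).map_add f g

lemma pDeriv_mul (p : Polynomial k) (f g : RatFunc k) :
    pDeriv p (f * g) = pDeriv p f * g + f * pDeriv p g := by
  simp only [pDeriv, rfDeriv_mul]; ring

lemma pDeriv_algebraMap (p q : Polynomial k) :
    pDeriv p (algebraMap (Polynomial k) (RatFunc k) q) =
      algebraMap (Polynomial k) (RatFunc k) (p * derivative q) := by
  rw [pDeriv, rfDeriv_algebraMap, map_mul]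

lemma pDerivVec_add {n : ℕ} (p : Polynomial k) (u v : Fin n → RatFunc k) :
    pDerivVec p (u + v) = pDerivVec p u + pDerivVec p v := by
  funext i; exact pDeriv_add p (u i) (v i)

lemma pDerivVec_mulVec {n : ℕ} (p : Polynomial k) (M : Matrix (Fin n) (Fin n) (RatFunc k))
    (v : Fin n → RatFunc k) :
    pDerivVec p (M.mulVec v) = (M.map (pDeriv p)).mulVec v + M.mulVec (pDerivVec p v) := by
  funext i
  simp only [pDerivVec, Matrix.mulVec, dotProduct, Pi.add_apply, Matrix.map_apply]
  rw [show (pDeriv p (∑ j, M i j * v j)) = pDerivHom p (∑ j, M i j * v j) from rfl,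
    map_sum, ← Finset.sum_add_distrib]
  exact Finset.sum_congr rfl fun j _ => pDeriv_mul p (M i j) (v j)

lemma pseudoLinDiff_add {n : ℕ} (p : Polynomial k) (T : Matrix (Fin n) (Fin n) (RatFunc k))
    (u v : Fin n → RatFunc k) :
    pseudoLinDiff p T (u + v) = pseudoLinDiff p T u + pseudoLinDiff p T v := by
  simp only [pseudoLinDiff, pDerivVec_add, Matrix.mulVec_add]; abel

lemma pseudoLinDiff_zero {n : ℕ} (p : Polynomial k) (T : Matrix (Fin n) (Fin n) (RatFunc k)) :
    pseudoLinDiff p T 0 = 0 := by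
  simp only [pseudoLinDiff, Matrix.mulVec_zero]
  funext i
  show pDeriv p (0 : RatFunc k) + 0 = 0
  rw [add_zero]
  exact (pDerivHom p).map_zero

lemma pseudoLinDiff_sum {n : ℕ} {ι : Type*} (p : Polynomial k)
    (T : Matrix (Fin n) (Fin n) (RatFunc k)) (s : Finset ι) (f : ι → Fin n → RatFunc k) :
    pseudoLinDiff p T (∑ i ∈ s, f i) = ∑ i ∈ s, pseudoLinDiff p T (f i) := by
  classical
  induction s using Finset.induction_on with
  | empty => simpa using pseudoLinDiff_zero p T
  | insert a s h ih => rw [Finset.sum_insert h, Finset.sum_insert h, pseudoLinDiff_add, ih]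


/-- For `θ = D + T` with an irreducible left MFD `T = D_M⁻¹ N`, and
`θ₁ = D + (N − D(D_M)) D_M⁻¹`, one has `θ^s = D^s + D_M⁻¹ Ω_s` with
`Ω_s = Σ_{i<s} θ₁^i ∘ N ∘ D^{s−1−i}`. -/
theorem pow_pseudoLinDiff_eq {n : ℕ} (p : Polynomial k)
    (T : Matrix (Fin n) (Fin n) (RatFunc k))
    (DM N : Matrix (Fin n) (Fin n) (Polynomial k)) (hDM : DM.det ≠ 0)
    (hT : T = (DM.map (algebraMap (Polynomial k) (RatFunc k)))⁻¹ *
        (N.map (algebraMap (Polynomial k) (RatFunc k))))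
    (hirr : ∀ G A B : Matrix (Fin n) (Fin n) (Polynomial k),
      DM = G * A → N = G * B → IsUnit G.det) :
    ∀ s : ℕ, ∀ v : Fin n → RatFunc k,
      (pseudoLinDiff p T)^[s] v =
        (pDerivVec p)^[s] v +
          ((DM.map (algebraMap (Polynomial k) (RatFunc k)))⁻¹).mulVec
            (∑ i ∈ Finset.range s,
              (pseudoLinDiff p
                  (((N - DM.map (fun q => p * Polynomial.derivative q)).map
                      (algebraMap (Polynomial k) (RatFunc k))) *
                    (DM.map (algebraMap (Polynomial k) (RatFunc k)))⁻¹))^[i]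
                ((N.map (algebraMap (Polynomial k) (RatFunc k))).mulVec
                  ((pDerivVec p)^[s - 1 - i] v))) := by
  set A := algebraMap (Polynomial k) (RatFunc k)
  set Dm : Matrix (Fin n) (Fin n) (RatFunc k) := DM.map A with hDm
  set Nm : Matrix (Fin n) (Fin n) (RatFunc k) := N.map A with hNm
  set DDm : Matrix (Fin n) (Fin n) (RatFunc k) :=
    (DM.map (fun q => p * Polynomial.derivative q)).map A with hDDm
  have hdet : Dm.det ≠ 0 := by
    rw [hDm, show DM.map ⇑A = A.mapMatrix DM from rfl, ← RingHom.map_det]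
    exact RatFunc.algebraMap_ne_zero hDM
  have hunit : IsUnit Dm.det := hdet.isUnit
  have hinv : Dm⁻¹ * Dm = 1 := Matrix.nonsing_inv_mul Dm hunit
  have hinv' : Dm * Dm⁻¹ = 1 := Matrix.mul_nonsing_inv Dm hunit
  -- derivative of Dm entrywise
  have hmapD : Dm.map (pDeriv p) = DDm := by
    funext i j
    simp only [hDm, hDDm, Matrix.map_apply]
    exact pDeriv_algebraMap p (DM i j)
  -- the matrix of θ₁
  set T1 : Matrix (Fin n) (Fin n) (RatFunc k) := ((N - DM.map (fun q => p * Polynomial.derivative q)).map A) * Dm⁻¹ with hT1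
  have hNDsub : (N - DM.map (fun q => p * Polynomial.derivative q)).map A = Nm - DDm := by
    funext i j
    simp [hNm, hDDm, Matrix.map_apply, Matrix.sub_apply]
  -- key conjugation identity
  have key : ∀ w : Fin n → RatFunc k,
      pseudoLinDiff p T (Dm⁻¹.mulVec w) = Dm⁻¹.mulVec (pseudoLinDiff p T1 w) := by
    intro w
    set u : Fin n → RatFunc k := Dm⁻¹.mulVec w with hu
    have hw : Dm.mulVec u = w := by
      rw [hu, Matrix.mulVec_mulVec, hinv', Matrix.one_mulVec]
    have hDw : pDerivVec p w = DDm.mulVec u + Dm.mulVec (pDerivVec p u) := by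
      rw [← hw, pDerivVec_mulVec, hmapD]
    have hDu : pDerivVec p u = Dm⁻¹.mulVec (pDerivVec p w - DDm.mulVec u) := by
      rw [hDw, add_sub_cancel_left, Matrix.mulVec_mulVec, hinv, Matrix.one_mulVec]
    rw [pseudoLinDiff, pseudoLinDiff, hDu, hT, hT1, hNDsub,
      ← Matrix.mulVec_mulVec u Dm⁻¹ Nm, ← Matrix.mulVec_add]
    congr 1
    rw [← Matrix.mulVec_mulVec w (Nm - DDm) Dm⁻¹, ← hu, Matrix.sub_mulVec]
    abel_nf
  -- main induction
  intro s
  induction s with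
  | zero => intro v; simp [Matrix.mulVec_zero]
  | succ s ih =>
    intro v
    rw [Function.iterate_succ_apply' (pseudoLinDiff p T), ih v, pseudoLinDiff_add]
    have step1 : pseudoLinDiff p T ((pDerivVec p)^[s] v) =
        (pDerivVec p)^[s + 1] v + Dm⁻¹.mulVec (Nm.mulVec ((pDerivVec p)^[s] v)) := by
      rw [pseudoLinDiff, Function.iterate_succ_apply' (pDerivVec p), hT,
        ← Matrix.mulVec_mulVec _ Dm⁻¹ Nm]
    have step2 : pseudoLinDiff p T (Dm⁻¹.mulVec
        (∑ i ∈ Finset.range s, (pseudoLinDiff p T1)^[i]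
          (Nm.mulVec ((pDerivVec p)^[s - 1 - i] v)))) =
        Dm⁻¹.mulVec (∑ i ∈ Finset.range s, (pseudoLinDiff p T1)^[i + 1]
          (Nm.mulVec ((pDerivVec p)^[s - 1 - i] v))) := by
      rw [key, pseudoLinDiff_sum]
      refine congrArg _ (Finset.sum_congr rfl fun i _ => ?_)
      exact (Function.iterate_succ_apply' (pseudoLinDiff p T1) i _).symm
    rw [step1, step2, add_assoc, ← Matrix.mulVec_add]
    refine congrArg₂ (· + ·) rfl (congrArg _ ?_)
    rw [Finset.sum_range_succ']
    have h0 : (pseudoLinDiff p T1)^[0] (Nm.mulVec ((pDerivVec p)^[s + 1 - 1 - 0] v)) =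
        Nm.mulVec ((pDerivVec p)^[s] v) := rfl
    rw [h0, add_comm]
    refine congrArg₂ (· + ·) (Finset.sum_congr rfl fun i _ => ?_) rfl
    have hi : s + 1 - 1 - (i + 1) = s - 1 - i := by omega
    rw [hi]
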